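/- Let G be a permutation group on [n] with n > 2. If for every transformation f : [n] → [n] of rank n−1 and all distinct 2-subsets {a,b}, {c,d} of [n] there exists g in the transformation monoid generated by G ∪ {f} with exactly one of g({a,b}), g({c,d}) a singleton, then for every 2-subset {a,b} of [n] there exists g ∈ G with g({a,b}) ≠ {a,b}. -/

import Mathlib

open Finset

/-- The set of functions on `Fin n` arising from elements of the permutation group `G`. -/
def permSet {n : ℕ} (G : Subgroup (Equiv.Perm (Fin n))) : Set (Function.End (Fin n)) :=
  {h | ∃ g ∈ G, h = ⇑g}

/-- The transformation monoid generated by `G ∪ {f}`. -/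
def genMon {n : ℕ} (G : Subgroup (Equiv.Perm (Fin n))) (f : Fin n → Fin n) :
    Submonoid (Function.End (Fin n)) :=
  Submonoid.closure (permSet G ∪ {f})

/-- A permutation group is primitive if no subset `Δ` with `1 < |Δ| < n` is a block. -/
def IsPrimitive' {n : ℕ} (G : Subgroup (Equiv.Perm (Fin n))) : Prop :=
  ¬ ∃ Δ : Finset (Fin n), 1 < Δ.card ∧ Δ.card < n ∧
      ∀ g ∈ G, Δ.image ⇑g = Δ ∨ Disjoint (Δ.image ⇑g) Δ

theorem exists_moving_2_set {n : ℕ} (hn : 2 < n) (G : Subgroup (Equiv.Perm (Fin n)))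
    (H : ∀ f : Fin n → Fin n, (univ.image f).card = n - 1 →
      ∀ A B : Finset (Fin n), A.card = 2 → B.card = 2 → A ≠ B →
        ∃ g ∈ genMon G f, Xor' ((A.image g).card = 1) ((B.image g).card = 1)) :
    ∀ A : Finset (Fin n), A.card = 2 → ∃ g ∈ G, A.image ⇑g ≠ A := by
  intro A hA
  by_contra hcon
  push_neg at hcon
  -- so every g ∈ G fixes A setwise
  obtain ⟨a, b, hab, rfl⟩ := Finset.card_eq_two.mp hA
  -- pick c outside A
  have hAne : ({a, b} : Finset (Fin n)) ≠ univ := by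
    intro h
    rw [h, card_univ, Fintype.card_fin] at hA
    omega
  obtain ⟨c, hc⟩ : ∃ c, c ∉ ({a, b} : Finset (Fin n)) := by
    by_contra h
    push_neg at h
    exact hAne (eq_univ_iff_forall.mpr h)
  have hca : c ≠ a := fun h => hc (by simp [h])
  have hcb : c ≠ b := fun h => hc (by simp [h])
  -- the rank n-1 map collapsing b onto a
  set f : Fin n → Fin n := fun x => if x = b then a else x with hf
  have hrank : (univ.image f).card = n - 1 := by
    have himg : univ.image f = univ.erase b := by
      ext y
      simp only [mem_image, mem_univ, true_and, mem_erase]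
      constructor
      · rintro ⟨x, rfl⟩
        refine ⟨?_, trivial⟩
        by_cases hx : x = b
        · simp [hf, hx]; exact hab
        · simpa [hf, hx] using hx
      · rintro ⟨hy, -⟩
        exact ⟨y, by simp [hf, hy]⟩
    rw [himg, card_erase_of_mem (mem_univ b), card_univ, Fintype.card_fin]
  -- key invariant: every element of the monoid identifies a and b, or lies in G
  have key : ∀ h ∈ genMon G f, h a = h b ∨ h ∈ permSet G := by
    intro h hh
    induction hh using Submonoid.closure_induction with
    | mem x hx =>
      rcases hx with hx | hx
      · exact Or.inr hx
      · left
        have hx : x = f := hx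
        subst hx
        simp [hf, hab]
    | one => exact Or.inr ⟨1, one_mem G, rfl⟩
    | mul x y _ _ hx hy =>
      have hxy : (x * y : Function.End (Fin n)) = x ∘ y := rfl
      rcases hy with hy | ⟨g, hgG, rfl⟩
      · rcases hx with hx | ⟨g, hgG, rfl⟩
        · left; simp [hxy, Function.comp, hy]
        · left; simp [hxy, Function.comp, hy]
      · rcases hx with hx | ⟨g', hg'G, rfl⟩
        · -- g fixes {a,b}, so {g a, g b} = {a, b}
          have hfix := hcon g hgG
          have hga : g a ∈ ({a, b} : Finset (Fin n)) := by
            rw [← hfix]; exact mem_image_of_mem _ (mem_insert_self a {b})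
          have hgb : g b ∈ ({a, b} : Finset (Fin n)) := by
            rw [← hfix]; exact mem_image_of_mem _ (mem_insert_of_mem (mem_singleton_self b))
          left
          simp only [mem_insert, mem_singleton] at hga hgb
          rcases hga with h1 | h1 <;> rcases hgb with h2 | h2 <;>
            simp [hxy, Function.comp, h1, h2, hx]
        · exact Or.inr ⟨g' * g, mul_mem hg'G hgG, rfl⟩
  -- apply H to the sets {a,c} and {b,c}
  have hcard1 : ({a, c} : Finset (Fin n)).card = 2 := by
    rw [card_insert_of_notMem (by simp [Ne.symm hca]), card_singleton]
  have hcard2 : ({b, c} : Finset (Fin n)).card = 2 := by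
    rw [card_insert_of_notMem (by simp [Ne.symm hcb]), card_singleton]
  have hne : ({a, c} : Finset (Fin n)) ≠ ({b, c} : Finset (Fin n)) := by
    intro h
    have : a ∈ ({b, c} : Finset (Fin n)) := h ▸ mem_insert_self a {c}
    simp only [mem_insert, mem_singleton] at this
    rcases this with h' | h'
    · exact hab h'
    · exact hca h'.symm
  obtain ⟨g, hg, hxor⟩ := H f hrank {a, c} {b, c} hcard1 hcard2 hne
  have himg1 : ({a, c} : Finset (Fin n)).image g = {g a, g c} := by
    exact (image_insert (f := (g : Fin n → Fin n)) a {c}).trans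
      (congrArg (insert (g a)) (image_singleton (g : Fin n → Fin n) c))
  have himg2 : ({b, c} : Finset (Fin n)).image g = {g b, g c} := by
    exact (image_insert (f := (g : Fin n → Fin n)) b {c}).trans
      (congrArg (insert (g b)) (image_singleton (g : Fin n → Fin n) c))
  rcases key g hg with heq | ⟨g0, hg0, rfl⟩
  · rw [himg1, himg2, heq] at hxor
    exact hxor.elim (fun ⟨h1, h2⟩ => h2 h1) (fun ⟨h1, h2⟩ => h2 h1)
  · have hi := g0.injective
    have hc1 : (({a, c} : Finset (Fin n)).image ⇑g0).card = 2 := by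
      rw [card_image_of_injective _ hi, hcard1]
    have hc2 : (({b, c} : Finset (Fin n)).image ⇑g0).card = 2 := by
      rw [card_image_of_injective _ hi, hcard2]
    rw [hc1, hc2] at hxor
    exact hxor.elim (fun ⟨h1, _⟩ => by omega) (fun ⟨h1, _⟩ => by omega)
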